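/- Isothermic surfaces are Moutard nets in the light cone (Theorem 'Isothermic surfaces = Moutard nets in the light cone', forward direction): Let N ≥ 2, let f: ℝ² → ℝᴺ and s: ℝ² → ℝ be twice continuously differentiable with s everywhere positive, and suppose ⟨∂₁f, ∂₂f⟩ = 0 and ∂₁∂₂f = (∂₂s/s)∂₁f + (∂₁s/s)∂₂f hold everywhere on ℝ². Define y: ℝ² → ℝᴺ × ℝ × ℝ by y = s⁻¹·(f, 1, ‖f‖²). Then: (a) y satisfies the Moutard equation ∂₁∂₂y = q·y everywhere, with q = s·∂₁∂₂(s⁻¹); (b) ⟨⟨y, y⟩⟩ = 0 everywhere, where ⟨⟨·,·⟩⟩ is the Minkowski-type bilinear form on ℝᴺ × ℝ × ℝ given by ⟨⟨(v,a,b),(v′,a′,b′)⟩⟩ = ⟨v,v′⟩ − (ab′ + a′b)/2 (so y takes values in the light cone). -/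

import Mathlib

/-- Partial derivative in the first coordinate direction of `ℝ²`. -/
noncomputable def pd1 {E : Type*} [NormedAddCommGroup E] [NormedSpace ℝ E]
    (g : ℝ × ℝ → E) (u : ℝ × ℝ) : E :=
  fderiv ℝ g u (1, 0)

/-- Partial derivative in the second coordinate direction of `ℝ²`. -/
noncomputable def pd2 {E : Type*} [NormedAddCommGroup E] [NormedSpace ℝ E]
    (g : ℝ × ℝ → E) (u : ℝ × ℝ) : E :=
  fderiv ℝ g u (0, 1)

/-- The Minkowski-type bilinear form on `ℝᴺ × ℝ × ℝ`, in the basis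
`e₁, …, e_N, e₀, e_∞` with `⟨e₀, e_∞⟩ = -1/2`. -/
noncomputable def mink {N : ℕ} (p q : EuclideanSpace ℝ (Fin N) × ℝ × ℝ) : ℝ :=
  (inner ℝ p.1 q.1 : ℝ) - (p.2.1 * q.2.2 + q.2.1 * p.2.2) / 2

section Aux

variable {E F : Type*} [NormedAddCommGroup E] [NormedSpace ℝ E]
  [NormedAddCommGroup F] [NormedSpace ℝ F]

theorem pd1_smul {c : ℝ × ℝ → ℝ} {g : ℝ × ℝ → E} {u : ℝ × ℝ}
    (hc : DifferentiableAt ℝ c u) (hg : DifferentiableAt ℝ g u) :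
    pd1 (fun w => c w • g w) u = c u • pd1 g u + pd1 c u • g u := by
  simp [pd1, fderiv_fun_smul hc hg]

theorem pd2_smul {c : ℝ × ℝ → ℝ} {g : ℝ × ℝ → E} {u : ℝ × ℝ}
    (hc : DifferentiableAt ℝ c u) (hg : DifferentiableAt ℝ g u) :
    pd2 (fun w => c w • g w) u = c u • pd2 g u + pd2 c u • g u := by
  simp [pd2, fderiv_fun_smul hc hg]

theorem pd1_add {a b : ℝ × ℝ → E} {u : ℝ × ℝ}
    (ha : DifferentiableAt ℝ a u) (hb : DifferentiableAt ℝ b u) :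
    pd1 (fun w => a w + b w) u = pd1 a u + pd1 b u := by
  simp [pd1, fderiv_fun_add ha hb]

theorem pd1_prod {a : ℝ × ℝ → E} {b : ℝ × ℝ → F} {u : ℝ × ℝ}
    (ha : DifferentiableAt ℝ a u) (hb : DifferentiableAt ℝ b u) :
    pd1 (fun w => (a w, b w)) u = (pd1 a u, pd1 b u) := by
  simp [pd1, DifferentiableAt.fderiv_prodMk ha hb]

theorem pd2_prod {a : ℝ × ℝ → E} {b : ℝ × ℝ → F} {u : ℝ × ℝ}
    (ha : DifferentiableAt ℝ a u) (hb : DifferentiableAt ℝ b u) :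
    pd2 (fun w => (a w, b w)) u = (pd2 a u, pd2 b u) := by
  simp [pd2, DifferentiableAt.fderiv_prodMk ha hb]

theorem pd1_diffble {g : ℝ × ℝ → E} (hg : ContDiff ℝ 2 g) :
    Differentiable ℝ (fun v => pd1 g v) :=
  (((hg.fderiv_right (le_refl 2)).clm_apply contDiff_const :
    ContDiff ℝ 1 fun v => fderiv ℝ g v (1, 0))).differentiable one_ne_zero

theorem pd2_diffble {g : ℝ × ℝ → E} (hg : ContDiff ℝ 2 g) :
    Differentiable ℝ (fun v => pd2 g v) :=
  (((hg.fderiv_right (le_refl 2)).clm_apply contDiff_const :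
    ContDiff ℝ 1 fun v => fderiv ℝ g v (0, 1))).differentiable one_ne_zero

theorem pd1_pd2_smul {c : ℝ × ℝ → ℝ} {g : ℝ × ℝ → E}
    (hc : ContDiff ℝ 2 c) (hg : ContDiff ℝ 2 g) (u : ℝ × ℝ) :
    pd1 (fun v => pd2 (fun w => c w • g w) v) u =
      pd1 (fun v => pd2 c v) u • g u + pd2 c u • pd1 g u
      + pd1 c u • pd2 g u + c u • pd1 (fun v => pd2 g v) u := by
  have hcd := hc.differentiable two_ne_zero
  have hgd := hg.differentiable two_ne_zero
  have hpc := pd2_diffble hc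
  have hpg := pd2_diffble hg
  have h : (fun v => pd2 (fun w => c w • g w) v)
      = fun v => c v • pd2 g v + pd2 c v • g v := by
    funext v; exact pd2_smul (hcd v) (hgd v)
  rw [h, pd1_add (a := fun v => c v • pd2 g v) (b := fun v => pd2 c v • g v) ((hcd u).smul (hpg u)) ((hpc u).smul (hgd u)),
    pd1_smul (hcd u) (hpg u), pd1_smul (hpc u) (hgd u)]
  abel

end Aux

/-- Isothermic surfaces are Moutard nets in the light cone: the lift
`y = s⁻¹ (f, 1, ‖f‖²)` of an isothermic surface `f` with metric `s`
satisfies the Moutard equation `∂₁∂₂ y = q y` with `q = s ∂₁∂₂(s⁻¹)`, and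
takes values in the light cone of the Minkowski form. -/
theorem isothermic_moutard_light_cone {N : ℕ} (hN : 2 ≤ N)
    (f : ℝ × ℝ → EuclideanSpace ℝ (Fin N)) (s : ℝ × ℝ → ℝ)
    (hf : ContDiff ℝ 2 f) (hs : ContDiff ℝ 2 s) (hs0 : ∀ u, 0 < s u)
    (horth : ∀ u, (inner ℝ (pd1 f u) (pd2 f u) : ℝ) = 0)
    (hkoe : ∀ u, pd1 (fun v => pd2 f v) u =
      (pd2 s u / s u) • pd1 f u + (pd1 s u / s u) • pd2 f u)
    (y : ℝ × ℝ → EuclideanSpace ℝ (Fin N) × ℝ × ℝ)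
    (hy : ∀ u, y u = (s u)⁻¹ • (f u, 1, ‖f u‖ ^ 2)) :
    (∀ u, pd1 (fun v => pd2 y v) u =
        (s u * pd1 (fun v => pd2 (fun w => (s w)⁻¹) v) u) • y u) ∧
    (∀ u, mink (y u) (y u) = 0) := by
  have hsne : ∀ u, s u ≠ 0 := fun u => (hs0 u).ne'
  -- the light cone condition (b)
  have hb2 : ∀ u, mink (y u) (y u) = 0 := by
    intro u
    rw [hy u]
    simp only [mink, Prod.smul_fst, Prod.smul_snd, smul_eq_mul,
      real_inner_smul_left, real_inner_smul_right, real_inner_self_eq_norm_sq,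
      norm_smul, Real.norm_eq_abs, mul_pow, sq_abs]
    ring
  refine ⟨?_, hb2⟩
  -- notation
  set c : ℝ × ℝ → ℝ := fun w => (s w)⁻¹ with hc_def
  have hc : ContDiff ℝ 2 c := hs.inv hsne
  have hcd := hc.differentiable two_ne_zero
  have hsd := hs.differentiable two_ne_zero
  have hfd := hf.differentiable two_ne_zero
  have hnb : ContDiff ℝ 2 (fun w => ‖f w‖ ^ 2) := hf.norm_sq ℝ
  have hbd := hnb.differentiable two_ne_zero
  have hg : ContDiff ℝ 2 (fun w => (f w, (1 : ℝ), ‖f w‖ ^ 2)) :=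
    hf.prodMk (contDiff_const.prodMk hnb)
  have hgd := hg.differentiable two_ne_zero
  have hy' : y = fun u => c u • (f u, (1 : ℝ), ‖f u‖ ^ 2) := funext hy
  have hp2f := pd2_diffble hf
  have hp2b := pd2_diffble hnb
  -- derivatives of the squared norm
  have hbinner : (fun w => ‖f w‖ ^ 2) = fun w => (inner ℝ (f w) (f w) : ℝ) :=
    funext fun w => (real_inner_self_eq_norm_sq (f w)).symm
  have pd1b : ∀ v, pd1 (fun w => ‖f w‖ ^ 2) v = 2 * (inner ℝ (f v) (pd1 f v) : ℝ) := by
    intro v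
    rw [hbinner]
    show fderiv ℝ (fun w => (inner ℝ (f w) (f w) : ℝ)) v (1, 0) = _
    rw [fderiv_inner_apply ℝ (hfd v) (hfd v) (1, 0)]
    unfold pd1
    linear_combination real_inner_comm (f v) ((fderiv ℝ f v) (1, 0))
  have pd2b : ∀ v, pd2 (fun w => ‖f w‖ ^ 2) v = 2 * (inner ℝ (f v) (pd2 f v) : ℝ) := by
    intro v
    rw [hbinner]
    show fderiv ℝ (fun w => (inner ℝ (f w) (f w) : ℝ)) v (0, 1) = _
    rw [fderiv_inner_apply ℝ (hfd v) (hfd v) (0, 1)]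
    unfold pd2
    linear_combination real_inner_comm (f v) ((fderiv ℝ f v) (0, 1))
  have pd12b : ∀ u, pd1 (fun v => pd2 (fun w => ‖f w‖ ^ 2) v) u
      = 2 * (inner ℝ (f u) (pd1 (fun v => pd2 f v) u) : ℝ) := by
    intro u
    have h2 : (fun v => pd2 (fun w => ‖f w‖ ^ 2) v)
        = fun v => 2 * (inner ℝ (f v) (pd2 f v) : ℝ) := funext pd2b
    rw [h2]
    show fderiv ℝ (fun v => 2 * (inner ℝ (f v) (pd2 f v) : ℝ)) u (1, 0) = _
    rw [fderiv_const_mul ((hfd u).inner ℝ (hp2f u)) 2]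
    simp only [ContinuousLinearMap.coe_smul', Pi.smul_apply, smul_eq_mul]
    rw [fderiv_inner_apply ℝ (hfd u) (hp2f u) (1, 0)]
    have h0 := horth u
    unfold pd1 at h0 ⊢
    rw [h0]
    ring
  -- first derivatives of the lift g
  have hpd1g : ∀ u, pd1 (fun w => (f w, (1 : ℝ), ‖f w‖ ^ 2)) u
      = (pd1 f u, 0, pd1 (fun w => ‖f w‖ ^ 2) u) := by
    intro u
    rw [pd1_prod (hfd u) ((differentiableAt_const (1 : ℝ)).prodMk (hbd u)),
      pd1_prod (differentiableAt_const (1 : ℝ)) (hbd u)]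
    simp [pd1]
  have hpd2g : ∀ u, pd2 (fun w => (f w, (1 : ℝ), ‖f w‖ ^ 2)) u
      = (pd2 f u, 0, pd2 (fun w => ‖f w‖ ^ 2) u) := by
    intro u
    rw [pd2_prod (hfd u) ((differentiableAt_const (1 : ℝ)).prodMk (hbd u)),
      pd2_prod (differentiableAt_const (1 : ℝ)) (hbd u)]
    simp [pd2]
  -- second mixed derivative of g
  have hpd12g : ∀ u, pd1 (fun v => pd2 (fun w => (f w, (1 : ℝ), ‖f w‖ ^ 2)) v) u
      = (pd1 (fun v => pd2 f v) u, 0, pd1 (fun v => pd2 (fun w => ‖f w‖ ^ 2) v) u) := by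
    intro u
    have h2 : (fun v => pd2 (fun w => (f w, (1 : ℝ), ‖f w‖ ^ 2)) v)
        = fun v => (pd2 f v, (0 : ℝ), pd2 (fun w => ‖f w‖ ^ 2) v) := funext hpd2g
    rw [h2, pd1_prod (hp2f u) ((differentiableAt_const (0 : ℝ)).prodMk (hp2b u)),
      pd1_prod (differentiableAt_const (0 : ℝ)) (hp2b u)]
    simp [pd1]
  -- Moutard-type identity for the lift g
  have hkoe_g : ∀ u, pd1 (fun v => pd2 (fun w => (f w, (1 : ℝ), ‖f w‖ ^ 2)) v) u
      = (pd2 s u / s u) • pd1 (fun w => (f w, (1 : ℝ), ‖f w‖ ^ 2)) u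
        + (pd1 s u / s u) • pd2 (fun w => (f w, (1 : ℝ), ‖f w‖ ^ 2)) u := by
    intro u
    rw [hpd12g u, hpd1g u, hpd2g u]
    refine Prod.ext (hkoe u) (Prod.ext (by simp) ?_)
    show pd1 (fun v => pd2 (fun w => ‖f w‖ ^ 2) v) u
      = (pd2 s u / s u) * pd1 (fun w => ‖f w‖ ^ 2) u
        + (pd1 s u / s u) * pd2 (fun w => ‖f w‖ ^ 2) u
    rw [pd12b u, hkoe u, pd1b u, pd2b u]
    rw [inner_add_right, real_inner_smul_right, real_inner_smul_right]
    ring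
  -- derivatives of c = s⁻¹
  have hcs : (fun w => c w * s w) = fun _ => (1 : ℝ) :=
    funext fun w => inv_mul_cancel₀ (hsne w)
  have hpd1c : ∀ u, pd1 c u = -(c u * (pd1 s u / s u)) := by
    intro u
    have h0 : pd1 (fun w => c w * s w) u = 0 := by
      rw [hcs]; simp [pd1]
    have h1 : pd1 (fun w => c w * s w) u = c u * pd1 s u + s u * pd1 c u := by
      show fderiv ℝ (fun w => c w * s w) u (1, 0) = _
      rw [fderiv_fun_mul (hcd u) (hsd u)]
      simp [pd1, mul_comm]
    rw [h1] at h0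
    have := hsne u
    field_simp [hc_def] at h0 ⊢
    linarith
  have hpd2c : ∀ u, pd2 c u = -(c u * (pd2 s u / s u)) := by
    intro u
    have h0 : pd2 (fun w => c w * s w) u = 0 := by
      rw [hcs]; simp [pd2]
    have h1 : pd2 (fun w => c w * s w) u = c u * pd2 s u + s u * pd2 c u := by
      show fderiv ℝ (fun w => c w * s w) u (0, 1) = _
      rw [fderiv_fun_mul (hcd u) (hsd u)]
      simp [pd2, mul_comm]
    rw [h1] at h0
    have := hsne u
    field_simp [hc_def] at h0 ⊢
    linarith
  -- main computation
  intro u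
  rw [hy']
  rw [pd1_pd2_smul hc hg u, hkoe_g u, hpd1c u, hpd2c u, smul_smul]
  have hmul : s u * pd1 (fun v => pd2 c v) u * c u = pd1 (fun v => pd2 c v) u := by
    have hcu : c u = (s u)⁻¹ := rfl
    rw [hcu, mul_comm (s u), mul_assoc, mul_inv_cancel₀ (hsne u), mul_one]
  rw [hmul]
  module
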